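/- In the ring $R_\Theta := \mathbb{Z}[X_1,X_2]/(X_1^2X_2 + X_1X_2^2,\; X_1^2 + X_2^2 + X_1X_2)$, the joint annihilator $\{r \in R_\Theta : X_1 r = 0 \text{ and } X_2 r = 0\}$ is a free $\mathbb{Z}$-submodule of rank 1, generated by the residue class of $X_1^2X_2$. -/
import Mathlib


open MvPolynomial

noncomputable section

/-- The defining ideal of the graph ring of the planar theta graph. -/
abbrev thetaIdeal : Ideal (MvPolynomial (Fin 2) ℤ) :=
  Ideal.span {X 0 ^ 2 * X 1 + X 0 * X 1 ^ 2, X 0 ^ 2 + X 1 ^ 2 + X 0 * X 1}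

/-- The graph ring `R_Θ = ℤ[X₁,X₂]/(X₁²X₂ + X₁X₂², X₁² + X₂² + X₁X₂)` of the
planar theta graph. -/
abbrev RTheta := MvPolynomial (Fin 2) ℤ ⧸ thetaIdeal

/-- The residue class of `X₁` in `R_Θ`. -/
abbrev RTheta.x1 : RTheta := Ideal.Quotient.mk thetaIdeal (X 0)

/-- The residue class of `X₂` in `R_Θ`. -/
abbrev RTheta.x2 : RTheta := Ideal.Quotient.mk thetaIdeal (X 1)

/-! ### Auxiliary material -/

abbrev P2 := MvPolynomial (Fin 2) ℤ

def dd (a b : ℕ) : Fin 2 →₀ ℕ := Finsupp.single 0 a + Finsupp.single 1 b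

lemma dd_apply0 (a b : ℕ) : dd a b 0 = a := by simp [dd, Finsupp.single_apply]
lemma dd_apply1 (a b : ℕ) : dd a b 1 = b := by simp [dd, Finsupp.single_apply]

lemma dd_le {a b a' b' : ℕ} : dd a b ≤ dd a' b' ↔ a ≤ a' ∧ b ≤ b' := by
  rw [Finsupp.le_def]
  constructor
  · intro h; exact ⟨by simpa [dd_apply0] using h 0, by simpa [dd_apply1] using h 1⟩
  · rintro ⟨h1, h2⟩ i
    fin_cases i <;> simp [dd_apply0, dd_apply1, h1, h2]

lemma dd_sub (a b a' b' : ℕ) : dd a b - dd a' b' = dd (a - a') (b - b') := by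
  ext i; fin_cases i <;>
    simp [Finsupp.tsub_apply, dd_apply0, dd_apply1]

lemma dd_inj {a b a' b' : ℕ} : dd a b = dd a' b' ↔ a = a' ∧ b = b' := by
  constructor
  · intro h
    exact ⟨by rw [← dd_apply0 a b, h, dd_apply0], by rw [← dd_apply1 a b, h, dd_apply1]⟩
  · rintro ⟨rfl, rfl⟩; rfl

lemma mono_eq (a b : ℕ) : (X 0 : P2) ^ a * X 1 ^ b = monomial (dd a b) 1 := by
  rw [X_pow_eq_monomial, X_pow_eq_monomial, monomial_mul, one_mul, dd]

lemma m10 : (X 0 : P2) = monomial (dd 1 0) 1 := by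
  simpa using mono_eq 1 0
lemma m01 : (X 1 : P2) = monomial (dd 0 1) 1 := by
  simpa using mono_eq 0 1
lemma m20 : (X 0 : P2) ^ 2 = monomial (dd 2 0) 1 := by
  simpa using mono_eq 2 0
lemma m02 : (X 1 : P2) ^ 2 = monomial (dd 0 2) 1 := by
  simpa using mono_eq 0 2
lemma m11 : (X 0 : P2) * X 1 = monomial (dd 1 1) 1 := by
  simpa using mono_eq 1 1
lemma m21 : (X 0 : P2) ^ 2 * X 1 = monomial (dd 2 1) 1 := by
  simpa using mono_eq 2 1
lemma m12 : (X 0 : P2) * X 1 ^ 2 = monomial (dd 1 2) 1 := by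
  simpa [pow_one] using mono_eq 1 2

/-- Coefficients of a general element `u·f + v·g` of the theta ideal. -/
lemma coeff_comb (u v : P2) (a b : ℕ) :
    coeff (dd a b) (u * (X 0 ^ 2 * X 1 + X 0 * X 1 ^ 2) + v * (X 0 ^ 2 + X 1 ^ 2 + X 0 * X 1)) =
      (if 2 ≤ a ∧ 1 ≤ b then coeff (dd (a - 2) (b - 1)) u else 0) +
      (if 1 ≤ a ∧ 2 ≤ b then coeff (dd (a - 1) (b - 2)) u else 0) +
      ((if 2 ≤ a then coeff (dd (a - 2) b) v else 0) +
       (if 2 ≤ b then coeff (dd a (b - 2)) v else 0) +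
       (if 1 ≤ a ∧ 1 ≤ b then coeff (dd (a - 1) (b - 1)) v else 0)) := by
  rw [m21, m12, m20, m02, m11]
  simp only [coeff_add, mul_add, coeff_mul_monomial', dd_le, dd_sub, mul_one,
    Nat.sub_zero, Nat.le_refl, and_true, true_and, Nat.sub_self, add_assoc]
  norm_num

lemma vanish_x {p : P2} (hp : p ∈ thetaIdeal) : coeff (dd 1 0) p = 0 := by
  rw [Ideal.mem_span_pair] at hp; obtain ⟨u, v, rfl⟩ := hp
  rw [coeff_comb]; norm_num

lemma vanish_x2 {p : P2} (hp : p ∈ thetaIdeal) : coeff (dd 2 0) p = coeff (dd 0 2) p := by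
  rw [Ideal.mem_span_pair] at hp; obtain ⟨u, v, rfl⟩ := hp
  rw [coeff_comb, coeff_comb]; norm_num

lemma vanish_xy {p : P2} (hp : p ∈ thetaIdeal) : coeff (dd 1 1) p = coeff (dd 0 2) p := by
  rw [Ideal.mem_span_pair] at hp; obtain ⟨u, v, rfl⟩ := hp
  rw [coeff_comb, coeff_comb]; norm_num

lemma vanish_x2y {p : P2} (hp : p ∈ thetaIdeal) : coeff (dd 2 1) p = coeff (dd 1 2) p := by
  rw [Ideal.mem_span_pair] at hp; obtain ⟨u, v, rfl⟩ := hp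
  rw [coeff_comb, coeff_comb]; norm_num; ring

local notation "mkT" => Ideal.Quotient.mk thetaIdeal

lemma mk_zero_of (p : P2)
    (h : ∃ u v, u * (X 0 ^ 2 * X 1 + X 0 * X 1 ^ 2) + v * (X 0 ^ 2 + X 1 ^ 2 + X 0 * X 1) = p) :
    mkT p = 0 :=
  Ideal.Quotient.eq_zero_iff_mem.mpr (Ideal.mem_span_pair.mpr h)

lemma hX03 : mkT (X 0 ^ 3) = 0 := mk_zero_of _ ⟨-1, X 0, by ring⟩
lemma hX031 : mkT (X 0 ^ 3 * X 1) = 0 := mk_zero_of _ ⟨-X 1, X 0 * X 1, by ring⟩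
lemma hX0212 : mkT (X 0 ^ 2 * X 1 ^ 2) = 0 := mk_zero_of _ ⟨X 0 + X 1, -(X 0 * X 1), by ring⟩
lemma hf0 : mkT (X 0 ^ 2 * X 1 + X 0 * X 1 ^ 2) = 0 := mk_zero_of _ ⟨1, 0, by ring⟩
lemma hg0 : mkT (X 0 ^ 2 + X 1 ^ 2 + X 0 * X 1) = 0 := mk_zero_of _ ⟨0, 1, by ring⟩

lemma hX12 : mkT (X 1 ^ 2) = -mkT (X 0 ^ 2) - mkT (X 0 * X 1) := by
  have := hg0; rw [map_add, map_add] at this; linear_combination this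
lemma hX122 : mkT (X 0 * X 1 ^ 2) = -mkT (X 0 ^ 2 * X 1) := by
  have := hf0; rw [map_add] at this; linear_combination this

/-- Multiplication table, left multiplication by `x₁`. -/
lemma s01 : (mkT (X 0) : RTheta) * mkT (X 0) = mkT (X 0 ^ 2) := by
  rw [← map_mul]; congr 1; ring
lemma s02 : (mkT (X 0) : RTheta) * mkT (X 1) = mkT (X 0 * X 1) := by
  rw [← map_mul]
lemma s03 : (mkT (X 0) : RTheta) * mkT (X 0 ^ 2) = 0 := by
  rw [← map_mul, show (X 0 * X 0 ^ 2 : P2) = X 0 ^ 3 by ring]; exact hX03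
lemma s04 : (mkT (X 0) : RTheta) * mkT (X 0 * X 1) = mkT (X 0 ^ 2 * X 1) := by
  rw [← map_mul]; congr 1; ring
lemma s05 : (mkT (X 0) : RTheta) * mkT (X 0 ^ 2 * X 1) = 0 := by
  rw [← map_mul, show (X 0 * (X 0 ^ 2 * X 1) : P2) = X 0 ^ 3 * X 1 by ring]; exact hX031

/-- Multiplication table, left multiplication by `x₂`. -/
lemma s11 : (mkT (X 1) : RTheta) * mkT (X 0) = mkT (X 0 * X 1) := by
  rw [← map_mul]; congr 1; ring
lemma s12 : (mkT (X 1) : RTheta) * mkT (X 1) = -mkT (X 0 ^ 2) - mkT (X 0 * X 1) := by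
  rw [← map_mul, ← hX12]; congr 1; ring
lemma s13 : (mkT (X 1) : RTheta) * mkT (X 0 ^ 2) = mkT (X 0 ^ 2 * X 1) := by
  rw [← map_mul]; congr 1; ring
lemma s14 : (mkT (X 1) : RTheta) * mkT (X 0 * X 1) = -mkT (X 0 ^ 2 * X 1) := by
  rw [← map_mul, show (X 1 * (X 0 * X 1) : P2) = X 0 * X 1 ^ 2 by ring]; exact hX122
lemma s15 : (mkT (X 1) : RTheta) * mkT (X 0 ^ 2 * X 1) = 0 := by
  rw [← map_mul, show (X 1 * (X 0 ^ 2 * X 1) : P2) = X 0 ^ 2 * X 1 ^ 2 by ring]; exact hX0212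

/-- Multiplication table, right multiplication by `x₁`. -/
lemma t01 : (mkT (X 0) : RTheta) * mkT (X 0) = mkT (X 0 ^ 2) := by
  rw [← map_mul]; congr 1; ring
lemma t02 : (mkT (X 1) : RTheta) * mkT (X 0) = mkT (X 0 * X 1) := by
  rw [← map_mul]; congr 1; ring
lemma t03 : (mkT (X 0 ^ 2) : RTheta) * mkT (X 0) = 0 := by
  rw [← map_mul, show (X 0 ^ 2 * X 0 : P2) = X 0 ^ 3 by ring]; exact hX03
lemma t04 : (mkT (X 0 * X 1) : RTheta) * mkT (X 0) = mkT (X 0 ^ 2 * X 1) := by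
  rw [← map_mul]; congr 1; ring
lemma t05 : (mkT (X 0 ^ 2 * X 1) : RTheta) * mkT (X 0) = 0 := by
  rw [← map_mul, show (X 0 ^ 2 * X 1 * X 0 : P2) = X 0 ^ 3 * X 1 by ring]; exact hX031

/-- Multiplication table, right multiplication by `x₂`. -/
lemma t11 : (mkT (X 0) : RTheta) * mkT (X 1) = mkT (X 0 * X 1) := by
  rw [← map_mul]
lemma t12 : (mkT (X 1) : RTheta) * mkT (X 1) = -mkT (X 0 ^ 2) - mkT (X 0 * X 1) := by
  rw [← map_mul, ← hX12]; congr 1; ring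
lemma t13 : (mkT (X 0 ^ 2) : RTheta) * mkT (X 1) = mkT (X 0 ^ 2 * X 1) := by
  rw [← map_mul]
lemma t14 : (mkT (X 0 * X 1) : RTheta) * mkT (X 1) = -mkT (X 0 ^ 2 * X 1) := by
  rw [← map_mul, show (X 0 * X 1 * X 1 : P2) = X 0 * X 1 ^ 2 by ring]; exact hX122
lemma t15 : (mkT (X 0 ^ 2 * X 1) : RTheta) * mkT (X 1) = 0 := by
  rw [← map_mul, show (X 0 ^ 2 * X 1 * X 1 : P2) = X 0 ^ 2 * X 1 ^ 2 by ring]; exact hX0212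

/-- Every element of `R_Θ` is a `ℤ`-linear combination of the six basis classes. -/
lemma span6 (r : RTheta) : ∃ a b c d e f : ℤ,
    r = a • 1 + b • mkT (X 0) + c • mkT (X 1) + d • mkT (X 0 ^ 2) + e • mkT (X 0 * X 1)
        + f • mkT (X 0 ^ 2 * X 1) := by
  obtain ⟨p, rfl⟩ := Ideal.Quotient.mk_surjective r
  induction p using MvPolynomial.induction_on with
  | C n =>
      refine ⟨n, 0, 0, 0, 0, 0, ?_⟩
      have : (C n : P2) = n • 1 := by rw [smul_eq_C_mul, mul_one]
      rw [this, map_zsmul, map_one]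
      module
  | add p q hp hq =>
      obtain ⟨a, b, c, d, e, f, hp⟩ := hp
      obtain ⟨a', b', c', d', e', f', hq⟩ := hq
      refine ⟨a + a', b + b', c + c', d + d', e + e', f + f', ?_⟩
      rw [map_add, hp, hq]; module
  | mul_X p i hp =>
      obtain ⟨a, b, c, d, e, f, hp⟩ := hp
      rw [map_mul, hp]
      fin_cases i <;> simp only [Fin.mk_zero, Fin.mk_one, Fin.isValue]
      · refine ⟨0, a, 0, b, c, e, ?_⟩
        simp only [add_mul, smul_mul_assoc, one_mul, t01, t02, t03, t04, t05, smul_zero]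
        module
      · refine ⟨0, 0, a, -c, b - c, d - e, ?_⟩
        simp only [add_mul, smul_mul_assoc, one_mul, t11, t12, t13, t14, t15, smul_zero]
        module

set_option maxHeartbeats 2000000 in
/-- The joint annihilator `{r ∈ R_Θ : X₁·r = 0 ∧ X₂·r = 0}` is a free `ℤ`-submodule
of rank 1, generated by the residue class of `X₁²X₂`: it equals the `ℤ`-span of the
class of `X₁²X₂`, and this class generates a free (torsion-free) `ℤ`-module. -/
theorem RTheta_joint_annihilator :
    (LinearMap.ker (LinearMap.mulLeft ℤ RTheta.x1) ⊓
        LinearMap.ker (LinearMap.mulLeft ℤ RTheta.x2)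
      = Submodule.span ℤ {Ideal.Quotient.mk thetaIdeal (X 0 ^ 2 * X 1)}) ∧
    ∀ n : ℤ, n • Ideal.Quotient.mk thetaIdeal (X 0 ^ 2 * X 1) = 0 → n = 0 := by
  constructor
  · apply le_antisymm
    · intro r hr
      rw [Submodule.mem_inf, LinearMap.mem_ker, LinearMap.mem_ker,
        LinearMap.mulLeft_apply, LinearMap.mulLeft_apply] at hr
      obtain ⟨hr1, hr2⟩ := hr
      obtain ⟨a, b, c, d, e, f, rfl⟩ := span6 r
      rw [mul_add, mul_add, mul_add, mul_add, mul_add] at hr1 hr2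
      simp only [mul_smul_comm, mul_one, s01, s02, s03, s04, s05, smul_zero, add_zero] at hr1
      -- hr1 : a • mkT (X 0) + b • mkT (X 0^2) + c • mkT (X 0 * X 1) + e • mkT (X 0^2 * X 1) = 0
      have hq1 : mkT (a • X 0 + b • X 0 ^ 2 + c • (X 0 * X 1) + e • (X 0 ^ 2 * X 1)) = 0 := by
        simp only [map_add, map_zsmul]
        exact hr1
      have hm1 := Ideal.Quotient.eq_zero_iff_mem.mp hq1
      rw [m21, m20, m11, m10] at hm1
      have ha := vanish_x hm1
      have hb := vanish_x2 hm1
      have hc := vanish_xy hm1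
      have he := vanish_x2y hm1
      simp only [coeff_add, coeff_smul, coeff_monomial, dd_inj, smul_eq_mul] at ha hb hc he
      norm_num at ha hb hc he
      subst ha hb hc he
      -- now use the second equation
      simp only [mul_smul_comm, mul_one, s11, s12, s13, s14, s15, zero_smul, smul_zero,
        mul_zero, add_zero, zero_add] at hr2
      -- hr2 : d • mkT (X 0 ^ 2 * X 1) = 0
      have hq2 : mkT (d • (X 0 ^ 2 * X 1)) = 0 := by
        rw [map_zsmul]; exact hr2
      have hm2 := Ideal.Quotient.eq_zero_iff_mem.mp hq2
      rw [m21] at hm2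
      have hd := vanish_x2y hm2
      simp only [coeff_smul, coeff_monomial, dd_inj, smul_eq_mul] at hd
      norm_num at hd
      subst hd
      refine Submodule.mem_span_singleton.mpr ⟨f, ?_⟩
      simp
    · rw [Submodule.span_le, Set.singleton_subset_iff]
      refine Submodule.mem_inf.mpr ⟨?_, ?_⟩ <;>
        rw [LinearMap.mem_ker, LinearMap.mulLeft_apply]
      · exact s05
      · exact s15
  · intro n hn
    have hq : mkT (n • (X 0 ^ 2 * X 1)) = 0 := by rw [map_zsmul]; exact hn
    have hm := Ideal.Quotient.eq_zero_iff_mem.mp hq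
    rw [m21] at hm
    have := vanish_x2y hm
    simp only [coeff_smul, coeff_monomial, dd_inj, smul_eq_mul] at this
    norm_num at this
    exact this

end
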